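/- Let π_N^β be the pushforward of the Curie–Weiss–Potts Gibbs measure under the magnetization map, so that π_N^β(z) = (1/Z)·(N!/((Nz_1)!⋯(Nz_q)!))·e^{βN|z|²/2} for z in the discrete simplex Ξ_N. Then there is a constant c₁ > 0 independent of N such that for all z, w ∈ Ξ_N: π_N^β(z) ≤ c₁·N^q·e^{βN(F_β(w) - F_β(z))}·π_N^β(w), where F_β(x) = -(1/2)|x|² + (1/β)∑_{k: x_k>0} x_k log x_k. -/

import Mathlib

open Real Finset

lemma term_up (N k : ℕ) (hN : 1 ≤ N) :
    Real.exp ((k : ℝ) * Real.log ((k : ℝ) / N)) / (k.factorial : ℝ)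
      ≤ Real.exp (k : ℝ) / (N : ℝ) ^ k := by
  have hN0 : (0:ℝ) < N := by exact_mod_cast hN
  rcases Nat.eq_zero_or_pos k with rfl | hk
  · simp
  · have hk0 : (0:ℝ) < k := by exact_mod_cast hk
    have hx : (0:ℝ) < (k:ℝ)/N := by positivity
    have h1 : Real.exp ((k:ℝ) * Real.log ((k:ℝ)/N)) = ((k:ℝ)/N)^k := by
      rw [Real.exp_nat_mul, Real.exp_log hx]
    have hkey : (k:ℝ)^k / (k.factorial : ℝ) ≤ Real.exp (k:ℝ) := by
      refine le_trans ?_ (Real.sum_le_exp_of_nonneg (le_of_lt hk0) (k+1))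
      exact Finset.single_le_sum (f := fun i => (k:ℝ)^i / (i.factorial : ℝ))
        (fun i _ => by positivity) (Finset.mem_range.2 (Nat.lt_succ_self k))
    rw [h1, div_pow]
    calc (k:ℝ)^k/(N:ℝ)^k/(k.factorial:ℝ) = ((k:ℝ)^k/(k.factorial:ℝ))/(N:ℝ)^k := by ring
      _ ≤ Real.exp (k:ℝ)/(N:ℝ)^k := by gcongr

lemma fact_up (k N : ℕ) (hk : 1 ≤ k) (hkN : k ≤ N) :
    (k.factorial : ℝ) ≤ Real.exp 1 * N * (k:ℝ)^k / Real.exp (k:ℝ) := by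
  have hN0 : (0:ℝ) < N := by exact_mod_cast hk.trans hkN
  obtain ⟨j, rfl⟩ : ∃ j, k = j + 1 := ⟨k - 1, (Nat.succ_pred_eq_of_pos hk).symm⟩
  have hmono := Stirling.stirlingSeq'_antitone (Nat.zero_le j)
  simp only [Function.comp_apply, Nat.succ_eq_add_one, zero_add] at hmono
  rw [Stirling.stirlingSeq_one] at hmono
  unfold Stirling.stirlingSeq at hmono
  set k := j + 1 with hkdef
  have hk0 : (0:ℝ) < (k:ℝ) := by positivity
  have hD : (0:ℝ) < Real.sqrt (2*(k:ℝ)) * ((k:ℝ)/Real.exp 1)^k := by positivity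
  have h2 : (k.factorial : ℝ) ≤ Real.exp 1/Real.sqrt 2 * (Real.sqrt (2*(k:ℝ)) * ((k:ℝ)/Real.exp 1)^k) :=
    (div_le_iff₀ hD).mp hmono
  have hs2 : Real.sqrt (2*(k:ℝ)) = Real.sqrt 2 * Real.sqrt (k:ℝ) :=
    Real.sqrt_mul (by norm_num) _
  have hsk : Real.sqrt (k:ℝ) ≤ (N:ℝ) := by
    have hkN' : (k:ℝ) ≤ (N:ℝ) := by exact_mod_cast hkN
    have h1N : (1:ℝ) ≤ (N:ℝ) := by exact_mod_cast hk.trans hkN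
    refine Real.sqrt_le_iff.mpr ⟨by positivity, by nlinarith⟩
  have hs2pos : (0:ℝ) < Real.sqrt 2 := by positivity
  have hep : Real.exp 1 ^ k = Real.exp (k:ℝ) := by
    rw [← Real.exp_nat_mul, mul_one]
  calc (k.factorial : ℝ)
      ≤ Real.exp 1/Real.sqrt 2 * (Real.sqrt (2*(k:ℝ)) * ((k:ℝ)/Real.exp 1)^k) := h2
    _ = Real.exp 1 * Real.sqrt (k:ℝ) * ((k:ℝ)^k / Real.exp (k:ℝ)) := by
        rw [hs2, div_pow, hep]; field_simp
    _ ≤ Real.exp 1 * (N:ℝ) * ((k:ℝ)^k / Real.exp (k:ℝ)) := by gcongr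
    _ = Real.exp 1 * N * (k:ℝ)^k / Real.exp (k:ℝ) := by ring

lemma term_low (N k : ℕ) (hN : 1 ≤ N) (hkN : k ≤ N) :
    Real.exp (k : ℝ) / (Real.exp 1 * N * (N:ℝ)^k)
      ≤ Real.exp ((k : ℝ) * Real.log ((k : ℝ) / N)) / (k.factorial : ℝ) := by
  have hN0 : (0:ℝ) < N := by exact_mod_cast hN
  rcases Nat.eq_zero_or_pos k with rfl | hk
  · simp only [Nat.cast_zero, Real.exp_zero, pow_zero, mul_one, zero_mul,
      Nat.factorial_zero, Nat.cast_one, div_one]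
    rw [div_le_one (by positivity)]
    have h1 : (1:ℝ) ≤ Real.exp 1 := Real.one_le_exp zero_le_one
    have h2 : (1:ℝ) ≤ (N:ℝ) := by exact_mod_cast hN
    nlinarith
  · have hk0 : (0:ℝ) < k := by exact_mod_cast hk
    have hx : (0:ℝ) < (k:ℝ)/N := by positivity
    have h1 : Real.exp ((k:ℝ) * Real.log ((k:ℝ)/N)) = (k:ℝ)^k/(N:ℝ)^k := by
      rw [Real.exp_nat_mul, Real.exp_log hx, div_pow]
    have hfact := fact_up k N hk hkN
    have hfpos : (0:ℝ) < (k.factorial : ℝ) := by exact_mod_cast k.factorial_pos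
    rw [h1, div_le_div_iff₀ (by positivity) hfpos]
    calc Real.exp (k:ℝ) * (k.factorial : ℝ)
        ≤ Real.exp (k:ℝ) * (Real.exp 1 * N * (k:ℝ)^k / Real.exp (k:ℝ)) := by gcongr
      _ = Real.exp 1 * N * (k:ℝ)^k := by field_simp
      _ = (k:ℝ)^k/(N:ℝ)^k * (Real.exp 1 * N * (N:ℝ)^k) := by field_simp

/-- Rough comparison bound for the pushforward Gibbs measure `π_N^β` on the
discrete simplex: since the partition function cancels, it is stated for the
unnormalized weights `W_N(m) = (N!/∏(m_i)!) e^{βN|z|²/2}`, `z = m/N`. -/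
theorem piNbeta_rough_bound (q : ℕ) (hq : 2 ≤ q) (β : ℝ) (hβ : 0 < β) :
    ∃ c₁ : ℝ, 0 < c₁ ∧
      ∀ N : ℕ, 1 ≤ N → ∀ m n : Fin q → ℕ,
        (∑ i, m i) = N → (∑ i, n i) = N →
        ((N.factorial : ℝ) / ∏ i, ((m i).factorial : ℝ))
            * Real.exp (β * N * (∑ i, ((m i : ℝ) / N) ^ 2) / 2)
          ≤ c₁ * (N : ℝ) ^ q
            * Real.exp (β * N *
                ((-(1 / 2) * ∑ i, ((n i : ℝ) / N) ^ 2
                    + (1 / β) * ∑ i, ((n i : ℝ) / N) * Real.log ((n i : ℝ) / N))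
                  - (-(1 / 2) * ∑ i, ((m i : ℝ) / N) ^ 2
                      + (1 / β) * ∑ i, ((m i : ℝ) / N) * Real.log ((m i : ℝ) / N))))
            * (((N.factorial : ℝ) / ∏ i, ((n i).factorial : ℝ))
                * Real.exp (β * N * (∑ i, ((n i : ℝ) / N) ^ 2) / 2)) := by
  refine ⟨Real.exp 1 ^ q, by positivity, ?_⟩
  intro N hN m n hm hn
  have hN0 : (0:ℝ) < N := by exact_mod_cast hN
  set Qm := ∑ i, ((m i : ℝ) / N) ^ 2 with hQm
  set Qn := ∑ i, ((n i : ℝ) / N) ^ 2 with hQn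
  set Sm := ∑ i, ((m i : ℝ) / N) * Real.log ((m i : ℝ) / N) with hSm
  set Sn := ∑ i, ((n i : ℝ) / N) * Real.log ((n i : ℝ) / N) with hSn
  have hNSm : (N:ℝ) * Sm = ∑ i, (m i : ℝ) * Real.log ((m i : ℝ)/N) := by
    rw [hSm, Finset.mul_sum]
    refine Finset.sum_congr rfl fun i _ => ?_
    rw [← mul_assoc, mul_comm (N:ℝ), div_mul_cancel₀ _ (ne_of_gt hN0)]
  have hNSn : (N:ℝ) * Sn = ∑ i, (n i : ℝ) * Real.log ((n i : ℝ)/N) := by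
    rw [hSn, Finset.mul_sum]
    refine Finset.sum_congr rfl fun i _ => ?_
    rw [← mul_assoc, mul_comm (N:ℝ), div_mul_cancel₀ _ (ne_of_gt hN0)]
  have hsumm : ∑ i, ((m i : ℝ)) = (N:ℝ) := by exact_mod_cast hm
  have hsumn : ∑ i, ((n i : ℝ)) = (N:ℝ) := by exact_mod_cast hn
  have hFm : (0:ℝ) < ∏ i, ((m i).factorial : ℝ) :=
    Finset.prod_pos fun i _ => by exact_mod_cast (m i).factorial_pos
  have hFn : (0:ℝ) < ∏ i, ((n i).factorial : ℝ) :=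
    Finset.prod_pos fun i _ => by exact_mod_cast (n i).factorial_pos
  -- upper bound for the m-product
  have hup : Real.exp ((N:ℝ) * Sm) / ∏ i, ((m i).factorial : ℝ)
      ≤ Real.exp (N:ℝ) / (N:ℝ) ^ N := by
    have heq : Real.exp ((N:ℝ) * Sm) / ∏ i, ((m i).factorial : ℝ)
        = ∏ i, Real.exp ((m i : ℝ) * Real.log ((m i : ℝ)/N)) / ((m i).factorial : ℝ) := by
      rw [Finset.prod_div_distrib, ← Real.exp_sum, hNSm]
    rw [heq]
    calc ∏ i, Real.exp ((m i : ℝ) * Real.log ((m i : ℝ)/N)) / ((m i).factorial : ℝ)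
        ≤ ∏ i, Real.exp ((m i : ℝ)) / (N:ℝ) ^ (m i) :=
          Finset.prod_le_prod (fun i _ => by positivity) (fun i _ => term_up N (m i) hN)
      _ = Real.exp (N:ℝ) / (N:ℝ) ^ N := by
          rw [Finset.prod_div_distrib, ← Real.exp_sum, hsumm,
            Finset.prod_pow_eq_pow_sum, hm]
  -- lower bound for the n-product
  have hlow : Real.exp (N:ℝ) / ((Real.exp 1 * N) ^ q * (N:ℝ) ^ N)
      ≤ Real.exp ((N:ℝ) * Sn) / ∏ i, ((n i).factorial : ℝ) := by
    have heq : Real.exp ((N:ℝ) * Sn) / ∏ i, ((n i).factorial : ℝ)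
        = ∏ i, Real.exp ((n i : ℝ) * Real.log ((n i : ℝ)/N)) / ((n i).factorial : ℝ) := by
      rw [Finset.prod_div_distrib, ← Real.exp_sum, hNSn]
    rw [heq]
    calc Real.exp (N:ℝ) / ((Real.exp 1 * N) ^ q * (N:ℝ) ^ N)
        = ∏ i, Real.exp ((n i : ℝ)) / (Real.exp 1 * N * (N:ℝ) ^ (n i)) := by
          rw [Finset.prod_div_distrib, ← Real.exp_sum, hsumn, Finset.prod_mul_distrib,
            Finset.prod_const, Finset.prod_pow_eq_pow_sum, hn, Finset.card_univ,
            Fintype.card_fin]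
      _ ≤ ∏ i, Real.exp ((n i : ℝ) * Real.log ((n i : ℝ)/N)) / ((n i).factorial : ℝ) := by
          refine Finset.prod_le_prod (fun i _ => by positivity) (fun i _ => ?_)
          refine term_low N (n i) hN ?_
          calc n i ≤ ∑ j, n j := Finset.single_le_sum (fun j _ => Nat.zero_le _) (mem_univ i)
            _ = N := hn
  -- the key comparison
  have K : Real.exp ((N:ℝ) * Sm) / ∏ i, ((m i).factorial : ℝ)
      ≤ Real.exp 1 ^ q * (N:ℝ) ^ q * (Real.exp ((N:ℝ) * Sn) / ∏ i, ((n i).factorial : ℝ)) := by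
    calc Real.exp ((N:ℝ) * Sm) / ∏ i, ((m i).factorial : ℝ)
        ≤ Real.exp (N:ℝ) / (N:ℝ) ^ N := hup
      _ = (Real.exp 1 * N) ^ q * (Real.exp (N:ℝ) / ((Real.exp 1 * N) ^ q * (N:ℝ) ^ N)) := by
          field_simp
      _ ≤ (Real.exp 1 * N) ^ q * (Real.exp ((N:ℝ) * Sn) / ∏ i, ((n i).factorial : ℝ)) := by
          gcongr
      _ = Real.exp 1 ^ q * (N:ℝ) ^ q * (Real.exp ((N:ℝ) * Sn) / ∏ i, ((n i).factorial : ℝ)) := by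
          rw [mul_pow]
  -- the exponent identity
  set E := β * (N:ℝ) * ((-(1/2) * Qn + (1/β) * Sn) - (-(1/2) * Qm + (1/β) * Sm)) with hE
  have hEq : E + β * (N:ℝ) * Qn / 2 = β * (N:ℝ) * Qm / 2 + ((N:ℝ) * Sn - (N:ℝ) * Sm) := by
    rw [hE]; field_simp; ring
  have hexp : Real.exp E * Real.exp (β * (N:ℝ) * Qn / 2)
      = Real.exp (β * (N:ℝ) * Qm / 2) * Real.exp ((N:ℝ) * Sn) * Real.exp (-((N:ℝ) * Sm)) := by
    rw [← Real.exp_add, ← Real.exp_add, ← Real.exp_add]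
    exact congrArg Real.exp (by linarith)
  set t : ℝ := (N.factorial : ℝ) * Real.exp (β * (N:ℝ) * Qm / 2) * Real.exp (-((N:ℝ) * Sm))
    with ht
  have ht0 : 0 ≤ t := by positivity
  have h2 := mul_le_mul_of_nonneg_left K ht0
  calc ((N.factorial : ℝ) / ∏ i, ((m i).factorial : ℝ)) * Real.exp (β * (N:ℝ) * Qm / 2)
      = t * (Real.exp ((N:ℝ) * Sm) / ∏ i, ((m i).factorial : ℝ)) := by
        rw [ht, Real.exp_neg]; field_simp
    _ ≤ t * (Real.exp 1 ^ q * (N:ℝ) ^ q *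
          (Real.exp ((N:ℝ) * Sn) / ∏ i, ((n i).factorial : ℝ))) := h2
    _ = Real.exp 1 ^ q * (N:ℝ) ^ q * Real.exp E *
          (((N.factorial : ℝ) / ∏ i, ((n i).factorial : ℝ)) * Real.exp (β * (N:ℝ) * Qn / 2)) := by
        rw [ht]
        linear_combination (-(Real.exp 1 ^ q * (N:ℝ) ^ q * (N.factorial : ℝ)
          / ∏ i, ((n i).factorial : ℝ))) * hexp
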